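/- Let φ be a proper (2m−1)-edge-coloring of the complete graph K_{2m} with m ≥ 2, and suppose a and b are two distinct colors that do NOT induce a C4-factor. Then there exist four distinct vertices x_1, x_2, x_3, x_4 such that φ(x_1 x_4) = φ(x_2 x_3) = a, φ(x_1 x_2) = b, and φ(x_3 x_4) ∉ {a, b}. -/

import Mathlib

/-- `φ` is a proper edge-coloring of the complete graph on `V` (given as a function on
unordered pairs of vertices): two edges sharing a vertex receive distinct colors. -/
def IsProperEdgeColoring {V C : Type*} (φ : Sym2 V → C) : Prop :=
  ∀ u v w : V, u ≠ v → u ≠ w → v ≠ w → φ s(u, v) ≠ φ s(u, w)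

/-- The spanning subgraph of the complete graph on `V` consisting of the edges
colored `a` or `b`. -/
def colorPairGraph {V C : Type*} (φ : Sym2 V → C) (a b : C) : SimpleGraph V where
  Adj u v := u ≠ v ∧ (φ s(u, v) = a ∨ φ s(u, v) = b)
  symm := ⟨by
    intro u v h
    exact ⟨h.1.symm, by rw [Sym2.eq_swap]; exact h.2⟩⟩
  loopless := ⟨fun v h => h.1 rfl⟩

/-- A graph is a `C4`-factor (of the complete graph on its vertex type) if it is
2-regular and every connected component is a 4-cycle (equivalently, for a 2-regular
graph, every connected component has exactly 4 vertices). -/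
def IsC4Factor {V : Type*} (G : SimpleGraph V) : Prop :=
  (∀ v : V, (G.neighborSet v).ncard = 2) ∧
  ∀ c : G.ConnectedComponent, c.supp.ncard = 4

/-- The set of colors appearing on edges of the clique induced by the vertex set `S`. -/
def cliqueColors {V C : Type*} (φ : Sym2 V → C) (S : Set V) : Set C :=
  {c | ∃ u ∈ S, ∃ v ∈ S, u ≠ v ∧ φ s(u, v) = c}

section Aux

variable {m : ℕ} {φ : Sym2 (Fin (2 * m)) → Fin (2 * m - 1)}

lemma color_uniq (hproper : IsProperEdgeColoring φ) {v w w' : Fin (2 * m)}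
    (hw : w ≠ v) (hw' : w' ≠ v) (h : φ s(v, w) = φ s(v, w')) : w = w' := by
  by_contra hne
  exact hproper v w w' hw.symm hw'.symm hne h

lemma exists_partner (hm : 2 ≤ m) (hproper : IsProperEdgeColoring φ)
    (c : Fin (2 * m - 1)) (v : Fin (2 * m)) : ∃ w, w ≠ v ∧ φ s(v, w) = c := by
  set g : {w : Fin (2 * m) // w ≠ v} → Fin (2 * m - 1) := fun w => φ s(v, w.1) with hg
  have hinj : Function.Injective g := by
    intro w w' h
    exact Subtype.ext (color_uniq hproper w.2 w'.2 h)
  have hcard : Fintype.card {w : Fin (2 * m) // w ≠ v} = 2 * m - 1 := by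
    have := Fintype.card_subtype_compl (fun w : Fin (2 * m) => w = v)
    simp only [Fintype.card_subtype_eq, Fintype.card_fin] at this
    exact this
  have hm1 : 0 < 2 * m - 1 := by omega
  have hbij : Function.Bijective g :=
    (Fintype.bijective_iff_injective_and_card g).mpr ⟨hinj, by simp [hcard]⟩
  obtain ⟨w, hw⟩ := hbij.2 c
  exact ⟨w.1, w.2, hw⟩

end Aux

/-- If `φ` is a proper `(2m-1)`-edge-coloring of `K_{2m}` (`m ≥ 2`) and `a ≠ b` are two
colors which do *not* induce a `C4`-factor, then there are four distinct vertices
`x₁, x₂, x₃, x₄` with `φ(x₁x₄) = φ(x₂x₃) = a`, `φ(x₁x₂) = b` and `φ(x₃x₄) ∉ {a, b}`. -/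
theorem exists_path_of_not_C4Factor (m : ℕ) (hm : 2 ≤ m)
    (φ : Sym2 (Fin (2 * m)) → Fin (2 * m - 1))
    (hproper : IsProperEdgeColoring φ)
    (a b : Fin (2 * m - 1)) (hab : a ≠ b)
    (hnot : ¬ IsC4Factor (colorPairGraph φ a b)) :
    ∃ x₁ x₂ x₃ x₄ : Fin (2 * m),
      (x₁ ≠ x₂ ∧ x₁ ≠ x₃ ∧ x₁ ≠ x₄ ∧ x₂ ≠ x₃ ∧ x₂ ≠ x₄ ∧ x₃ ≠ x₄) ∧
      φ s(x₁, x₄) = a ∧ φ s(x₂, x₃) = a ∧ φ s(x₁, x₂) = b ∧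
      φ s(x₃, x₄) ≠ a ∧ φ s(x₃, x₄) ≠ b := by
  classical
  -- partner functions: `f c v` is the unique vertex joined to `v` by color `c`
  choose f hfne hfc using fun (c : Fin (2 * m - 1)) (v : Fin (2 * m)) =>
    exists_partner hm hproper c v
  have huniq : ∀ c (v w : Fin (2 * m)), w ≠ v → φ s(v, w) = c → f c v = w := by
    intro c v w hw hcol
    exact color_uniq hproper (hfne c v) hw (by rw [hfc c v, hcol])
  have hinv : ∀ c v, f c (f c v) = v := by
    intro c v
    exact huniq c (f c v) v (hfne c v).symm (by rw [Sym2.eq_swap]; exact hfc c v)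
  set G := colorPairGraph φ a b with hG
  have hAdj : ∀ u w, G.Adj u w ↔ (u ≠ w ∧ (φ s(u, w) = a ∨ φ s(u, w) = b)) := by
    intro u w; rfl
  have hnbr : ∀ v, G.neighborSet v = {f a v, f b v} := by
    intro v
    ext w
    simp only [SimpleGraph.mem_neighborSet, hAdj, Set.mem_insert_iff, Set.mem_singleton_iff]
    constructor
    · rintro ⟨hne, h | h⟩
      · exact Or.inl (huniq a v w (Ne.symm hne) h).symm
      · exact Or.inr (huniq b v w (Ne.symm hne) h).symm
    · rintro (rfl | rfl)
      · exact ⟨(hfne a v).symm, Or.inl (hfc a v)⟩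
      · exact ⟨(hfne b v).symm, Or.inr (hfc b v)⟩
  have hfab : ∀ v, f a v ≠ f b v := by
    intro v h
    apply hab
    rw [← hfc a v, h, hfc b v]
  have hreg : ∀ v, (G.neighborSet v).ncard = 2 := by
    intro v
    rw [hnbr v]
    exact Set.ncard_pair (hfab v)
  have hbad : ∃ c : G.ConnectedComponent, c.supp.ncard ≠ 4 := by
    by_contra h
    push_neg at h
    exact hnot ⟨hreg, h⟩
  obtain ⟨comp, hcomp⟩ := hbad
  obtain ⟨v, hv⟩ := comp.exists_rep
  have hv' : G.connectedComponentMk v = comp := hv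
  -- the four vertices
  set x₁ := v with hx₁
  set x₂ := f b v with hx₂
  set x₃ := f a x₂ with hx₃
  set x₄ := f a x₁ with hx₄
  have h12 : x₁ ≠ x₂ := (hfne b v).symm
  have h14 : x₁ ≠ x₄ := (hfne a v).symm
  have h23 : x₂ ≠ x₃ := (hfne a x₂).symm
  have h24 : x₂ ≠ x₄ := fun h => hfab v h.symm
  have h34 : x₃ ≠ x₄ := by
    intro h
    apply h12
    have := congrArg (f a) h
    rw [hinv, hinv] at this
    exact this.symm
  have h13 : x₁ ≠ x₃ := by
    intro h
    apply h24
    have := congrArg (f a) h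
    rw [hinv] at this
    rw [← this]
  have c14 : φ s(x₁, x₄) = a := hfc a x₁
  have c23 : φ s(x₂, x₃) = a := hfc a x₂
  have c12 : φ s(x₁, x₂) = b := hfc b x₁
  have c34a : φ s(x₃, x₄) ≠ a := by
    intro h
    have : f a x₃ = x₄ := huniq a x₃ x₄ h34.symm h
    rw [hx₃, hinv] at this
    exact h24 this
  have c34b : φ s(x₃, x₄) ≠ b := by
    intro h
    have hb3 : f b x₃ = x₄ := huniq b x₃ x₄ h34.symm h
    -- then the component of v is exactly {x₁,x₂,x₃,x₄}, of size 4
    have hb4 : f b x₄ = x₃ := by rw [← hb3, hinv]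
    have ha3 : f a x₃ = x₂ := by rw [hx₃, hinv]
    have ha4 : f a x₄ = x₁ := by rw [hx₄, hinv]
    have hb2 : f b x₂ = x₁ := by rw [hx₂, hinv]
    set S : Set (Fin (2 * m)) := {x₁, x₂, x₃, x₄} with hS
    have hclosed : ∀ u ∈ S, ∀ w, G.Adj u w → w ∈ S := by
      intro u hu w hw
      have hwmem : w ∈ G.neighborSet u := hw
      rw [hnbr u] at hwmem
      rcases hu with rfl | rfl | rfl | rfl <;>
        rcases hwmem with rfl | rfl <;>
        simp [hS, hb3, hb4, ha3, ha4, hb2, ← hx₂, ← (show x₂ = f b x₁ from hx₂), ← hx₃, ← hx₄, ← hx₁]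
    have hwalk : ∀ (u w : Fin (2 * m)), G.Walk u w → u ∈ S → w ∈ S := by
      intro u w p
      induction p with
      | nil => exact id
      | cons h p ih => intro hu; exact ih (hclosed _ hu _ h)
    have hadj12 : G.Adj x₁ x₂ := ⟨h12, Or.inr c12⟩
    have hadj23 : G.Adj x₂ x₃ := ⟨h23, Or.inl c23⟩
    have hadj14 : G.Adj x₁ x₄ := ⟨h14, Or.inl c14⟩
    have hsupp : comp.supp = S := by
      ext w
      rw [SimpleGraph.ConnectedComponent.mem_supp_iff]
      constructor
      · intro hwc
        have hreach : G.Reachable v w := by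
          rw [← SimpleGraph.ConnectedComponent.eq, hv', hwc]
        obtain ⟨p⟩ := hreach
        exact hwalk v w p (by simp [hS, ← hx₁])
      · intro hwS
        rw [← hv', SimpleGraph.ConnectedComponent.eq]
        symm
        rcases hwS with rfl | rfl | rfl | rfl
        · exact SimpleGraph.Reachable.refl _
        · exact hadj12.reachable
        · exact hadj12.reachable.trans hadj23.reachable
        · exact hadj14.reachable
    apply hcomp
    rw [hsupp, hS]
    rw [Set.ncard_insert_of_notMem (by simp [h12, h13, h14]),
      Set.ncard_insert_of_notMem (by simp [h23, h24]),
      Set.ncard_pair h34]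
  exact ⟨x₁, x₂, x₃, x₄, ⟨h12, h13, h14, h23, h24, h34⟩, c14, c23, c12, c34a, c34b⟩
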